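/- Let p be a prime with p ≡ 3 (mod 4), and write p = 4k+3. If a is a nonzero quadratic residue mod p, then the set {a + s : s a quadratic non-residue mod p} contains 0, exactly k nonzero quadratic residues, and exactly k quadratic non-residues. -/

import Mathlib

open Finset

theorem stmt1 (p k : ℕ) [Fact p.Prime] (hpk : p = 4 * k + 3)
    (a : ZMod p) (ha : a ≠ 0) (haQ : IsSquare a) :
    (0 : ZMod p) ∈ {x : ZMod p | ∃ s : ZMod p, s ≠ 0 ∧ ¬ IsSquare s ∧ x = a + s} ∧
    {x : ZMod p | (∃ s : ZMod p, s ≠ 0 ∧ ¬ IsSquare s ∧ x = a + s) ∧ x ≠ 0 ∧ IsSquare x}.ncard = k ∧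
    {x : ZMod p | (∃ s : ZMod p, s ≠ 0 ∧ ¬ IsSquare s ∧ x = a + s) ∧ x ≠ 0 ∧ ¬ IsSquare x}.ncard = k := by
  have hp : p.Prime := Fact.out
  have hrc : ringChar (ZMod p) ≠ 2 := by
    rw [ZMod.ringChar_zmod_n]; omega
  set χ := quadraticChar (ZMod p) with hχdef
  have hd : ∀ x : ZMod p, x ≠ 0 → χ x = 1 ∨ χ x = -1 := fun x hx => quadraticChar_dichotomy hx
  have hz : χ (0 : ZMod p) = 0 := quadraticChar_zero
  have hne0 : ∀ x : ZMod p, χ x = 1 → x ≠ 0 := by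
    intro x h hx0; rw [hx0, hz] at h; exact one_ne_zero h.symm
  have hne0' : ∀ x : ZMod p, χ x = -1 → x ≠ 0 := by
    intro x h hx0; rw [hx0, hz] at h; norm_num at h
  have hm1 : χ (-1 : ZMod p) = -1 := by
    rw [quadraticChar_neg_one_iff_not_isSquare, ZMod.exists_sq_eq_neg_one_iff]
    simp only [not_not]; omega
  have hinv : ∀ x : ZMod p, x ≠ 0 → χ x⁻¹ = χ x := by
    intro x hx
    have h1 : χ x * χ x⁻¹ = 1 := by
      rw [← map_mul, mul_inv_cancel₀ hx, map_one]
    rcases hd x hx with h | h <;> rw [h] at h1 ⊢ <;> linarith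
  have haχ : χ a = 1 := (quadraticChar_one_iff_isSquare ha).mpr haQ
  -- Finsets
  classical
  set A : Finset (ZMod p) := univ.filter (fun x => χ x = 1 ∧ χ (x - a) = -1) with hA
  set B : Finset (ZMod p) := univ.filter (fun x => χ x = -1 ∧ χ (x - a) = -1) with hB
  set N : Finset (ZMod p) := univ.filter (fun x => χ x = -1) with hN
  set S : Finset (ZMod p) := univ.filter (fun x => χ x = 1) with hS
  -- S.card = N.card via negation
  have hSN : S.card = N.card := by
    refine Finset.card_bij' (fun x _ => -x) (fun x _ => -x) ?_ ?_ ?_ ?_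
    · intro x hx
      simp only [hS, mem_filter, mem_univ, true_and] at hx
      simp only [hN, mem_filter, mem_univ, true_and]
      rw [show (-x : ZMod p) = -1 * x by ring, map_mul, hm1, hx]; ring
    · intro x hx
      simp only [hN, mem_filter, mem_univ, true_and] at hx
      simp only [hS, mem_filter, mem_univ, true_and]
      rw [show (-x : ZMod p) = -1 * x by ring, map_mul, hm1, hx]; ring
    · intro x _; exact neg_neg x
    · intro x _; exact neg_neg x
  -- p = S.card + (N.card + 1)
  have hcard_univ : (univ : Finset (ZMod p)).card = p := by
    rw [card_univ, ZMod.card]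
  have hfilterneg : univ.filter (fun x : ZMod p => ¬ (χ x = 1)) = insert 0 N := by
    ext x
    simp only [hN, mem_filter, mem_univ, true_and, mem_insert]
    constructor
    · intro h
      by_cases hx0 : x = 0
      · exact Or.inl hx0
      · exact Or.inr ((hd x hx0).resolve_left h)
    · rintro (rfl | h)
      · rw [hz]; norm_num
      · rw [h]; norm_num
  have hsplit : S.card + (N.card + 1) = p := by
    have h0N : (0 : ZMod p) ∉ N := by
      simp only [hN, mem_filter, mem_univ, true_and, hz]; norm_num
    have := Finset.card_filter_add_card_filter_not (s := (univ : Finset (ZMod p)))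
      (p := fun x => χ x = 1)
    rw [hfilterneg, Finset.card_insert_of_notMem h0N, hcard_univ] at this
    exact this
  have hNcard : N.card = 2 * k + 1 := by
    rw [hSN] at hsplit; omega
  -- T = a + N
  set T : Finset (ZMod p) := N.image (fun s => a + s) with hT
  have hTcard : T.card = N.card := Finset.card_image_of_injective _ (add_right_injective a)
  have hTeq : T = univ.filter (fun x => χ (x - a) = -1) := by
    ext x
    simp only [hT, hN, mem_image, mem_filter, mem_univ, true_and]
    constructor
    · rintro ⟨s, hs, rfl⟩; simpa using hs
    · intro h; exact ⟨x - a, h, by ring⟩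
  -- T.filter (χ = 1) = A
  have hTA : T.filter (fun x => χ x = 1) = A := by
    rw [hTeq, Finset.filter_filter]
    ext x
    simp only [hA, mem_filter, mem_univ, true_and]
    tauto
  have hTB : T.filter (fun x => ¬ (χ x = 1)) = insert 0 B := by
    rw [hTeq, Finset.filter_filter]
    ext x
    simp only [hB, mem_filter, mem_univ, true_and, mem_insert]
    constructor
    · rintro ⟨h1, h2⟩
      by_cases hx0 : x = 0
      · exact Or.inl hx0
      · exact Or.inr ⟨(hd x hx0).resolve_left h2, h1⟩
    · rintro (rfl | ⟨h1, h2⟩)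
      · refine ⟨?_, by rw [hz]; norm_num⟩
        rw [zero_sub, show (-a : ZMod p) = -1 * a by ring, map_mul, hm1, haχ]; norm_num
      · exact ⟨h2, by rw [h1]; norm_num⟩
  have hTsplit : A.card + (B.card + 1) = T.card := by
    have h0B : (0 : ZMod p) ∉ B := by
      simp only [hB, mem_filter, mem_univ, true_and, hz]; norm_num
    have := Finset.card_filter_add_card_filter_not (s := T)
      (p := fun x => χ x = 1)
    rw [hTA, hTB, Finset.card_insert_of_notMem h0B] at this
    omega
  -- bijection A ≃ B
  have hAB : A.card = B.card := by
    refine Finset.card_bij' (fun x _ => a * (x - a) * x⁻¹) (fun y _ => a * a * (a - y)⁻¹) ?_ ?_ ?_ ?_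
    · -- maps A to B
      intro x hx
      simp only [hA, mem_filter, mem_univ, true_and] at hx
      obtain ⟨hx1, hx2⟩ := hx
      have hx0 : x ≠ 0 := hne0 x hx1
      simp only [hB, mem_filter, mem_univ, true_and]
      constructor
      · rw [map_mul, map_mul, haχ, hx2, hinv x hx0, hx1]; ring
      · have : a * (x - a) * x⁻¹ - a = -1 * (a * a) * x⁻¹ := by
          field_simp; ring
        rw [this, map_mul, map_mul, map_mul, hm1, haχ, hinv x hx0, hx1]; ring
    · -- maps B to A
      intro y hy
      simp only [hB, mem_filter, mem_univ, true_and] at hy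
      obtain ⟨hy1, hy2⟩ := hy
      have hay : χ (a - y) = 1 := by
        rw [show (a - y : ZMod p) = -1 * (y - a) by ring, map_mul, hm1, hy2]; ring
      have hay0 : (a - y : ZMod p) ≠ 0 := hne0 _ hay
      simp only [hA, mem_filter, mem_univ, true_and]
      constructor
      · rw [map_mul, map_mul, haχ, hinv _ hay0, hay]; ring
      · have : a * a * (a - y)⁻¹ - a = a * y * (a - y)⁻¹ := by
          field_simp; ring
        rw [this, map_mul, map_mul, haχ, hy1, hinv _ hay0, hay]; ring
    · -- left inverse
      intro x hx
      simp only [hA, mem_filter, mem_univ, true_and] at hx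
      have hx0 : x ≠ 0 := hne0 x hx.1
      have h1 : a - a * (x - a) * x⁻¹ = a * a * x⁻¹ := by field_simp; ring
      show a * a * (a - a * (x - a) * x⁻¹)⁻¹ = x
      rw [h1, mul_inv, mul_inv, inv_inv]
      field_simp
    · -- right inverse
      intro y hy
      simp only [hB, mem_filter, mem_univ, true_and] at hy
      have hay : χ (a - y) = 1 := by
        rw [show (a - y : ZMod p) = -1 * (y - a) by ring, map_mul, hm1, hy.2]; ring
      have hay0 : (a - y : ZMod p) ≠ 0 := hne0 _ hay
      have h1 : a * a * (a - y)⁻¹ - a = a * y * (a - y)⁻¹ := by field_simp; ring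
      have h2 : (a * a * (a - y)⁻¹ : ZMod p) ≠ 0 := by
        apply mul_ne_zero (mul_ne_zero ha ha) (inv_ne_zero hay0)
      show a * (a * a * (a - y)⁻¹ - a) * (a * a * (a - y)⁻¹)⁻¹ = y
      rw [h1]
      field_simp
  have hAk : A.card = k := by omega
  have hBk : B.card = k := by omega
  -- set identifications
  have hsetA : {x : ZMod p | (∃ s : ZMod p, s ≠ 0 ∧ ¬ IsSquare s ∧ x = a + s) ∧ x ≠ 0 ∧ IsSquare x}
      = (↑A : Set (ZMod p)) := by
    ext x
    simp only [hA, Set.mem_setOf_eq, Finset.coe_filter, mem_univ, true_and, Set.mem_setOf_eq]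
    constructor
    · rintro ⟨⟨s, hs0, hsn, rfl⟩, hx0, hxsq⟩
      refine ⟨(quadraticChar_one_iff_isSquare hx0).mpr hxsq, ?_⟩
      rw [show (a + s - a : ZMod p) = s by ring]
      exact quadraticChar_neg_one_iff_not_isSquare.mpr hsn
    · rintro ⟨h1, h2⟩
      have hx0 : x ≠ 0 := hne0 x h1
      refine ⟨⟨x - a, hne0' _ h2, quadraticChar_neg_one_iff_not_isSquare.mp h2, by ring⟩,
        hx0, (quadraticChar_one_iff_isSquare hx0).mp h1⟩
  have hsetB : {x : ZMod p | (∃ s : ZMod p, s ≠ 0 ∧ ¬ IsSquare s ∧ x = a + s) ∧ x ≠ 0 ∧ ¬ IsSquare x}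
      = (↑B : Set (ZMod p)) := by
    ext x
    simp only [hB, Set.mem_setOf_eq, Finset.coe_filter, mem_univ, true_and, Set.mem_setOf_eq]
    constructor
    · rintro ⟨⟨s, hs0, hsn, rfl⟩, hx0, hxsq⟩
      refine ⟨quadraticChar_neg_one_iff_not_isSquare.mpr hxsq, ?_⟩
      rw [show (a + s - a : ZMod p) = s by ring]
      exact quadraticChar_neg_one_iff_not_isSquare.mpr hsn
    · rintro ⟨h1, h2⟩
      exact ⟨⟨x - a, hne0' _ h2, quadraticChar_neg_one_iff_not_isSquare.mp h2, by ring⟩,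
        hne0' _ h1, quadraticChar_neg_one_iff_not_isSquare.mp h1⟩
  refine ⟨?_, ?_, ?_⟩
  · refine ⟨-a, neg_ne_zero.mpr ha, ?_, by ring⟩
    apply quadraticChar_neg_one_iff_not_isSquare.mp
    rw [show (-a : ZMod p) = -1 * a by ring, map_mul, hm1, haχ]; ring
  · rw [hsetA, Set.ncard_coe_finset, hAk]
  · rw [hsetB, Set.ncard_coe_finset, hBk]
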